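/- Let (X, d) be a compact metric space and n ≥ 1. For all μ, ν, τ ∈ I(X) and every λ ∈ [−∞, 0], one has d̂_n(μ, (λ⊙ν) ⊕ τ) ≤ max(d̂_n(μ, ν), d̂_n(μ, τ)), where (λ⊙ν) ⊕ τ is the idempotent measure φ ↦ max(λ + ν(φ), τ(φ)) (computed in the extended reals with −∞ + r = −∞). Consequently, every open ball with respect to d̂_n in I(X) is max-plus convex. -/

import Mathlib

/-- An idempotent (Maslov) probability measure on a topological space `X` is a functional
`μ : C(X, ℝ) → ℝ` that is normalized on constants, shifts under addition of constants, and
turns pointwise maxima into maxima. -/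
def IsIdemMeasure {X : Type*} [TopologicalSpace X] (μ : C(X, ℝ) → ℝ) : Prop :=
  (∀ c : ℝ, μ (ContinuousMap.const X c) = c) ∧
  (∀ (c : ℝ) (φ : C(X, ℝ)), μ (ContinuousMap.const X c + φ) = c + μ φ) ∧
  (∀ φ ψ : C(X, ℝ), μ (φ ⊔ ψ) = max (μ φ) (μ ψ))

/-- The space `I(X)` of idempotent probability measures on `X`; as a subtype of the product
`(C(X, ℝ) → ℝ)` it automatically carries the weak* (pointwise convergence) topology. -/
abbrev IdemMeasure (X : Type*) [TopologicalSpace X] :=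
  {μ : C(X, ℝ) → ℝ // IsIdemMeasure μ}

/-- `n-LIP(X, d)`: the continuous functions that are Lipschitz with constant `n`. -/
def nLip (X : Type*) [MetricSpace X] (n : ℕ) : Set C(X, ℝ) :=
  {φ | ∀ x y : X, |φ x - φ y| ≤ (n : ℝ) * dist x y}

/-- The pseudometric `d̂ₙ(μ, ν) = sup { |μ(φ) − ν(φ)| : φ ∈ n-LIP(X, d) }`. -/
noncomputable def dHat {X : Type*} [MetricSpace X] (n : ℕ) (μ ν : C(X, ℝ) → ℝ) : ℝ :=
  sSup {r : ℝ | ∃ φ ∈ nLip X n, r = |μ φ - ν φ|}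

/-- The max-plus combination `α⊙μ ⊕ β⊙ν`: the functional
`φ ↦ max(α + μ(φ), β + ν(φ))`, computed in the extended reals `ℝ ∪ {−∞}` (with the
convention `−∞ + r = −∞`) and read off as a real number (which it is when `max(α, β) = 0`). -/
noncomputable def maxPlusComb {X : Type*} [TopologicalSpace X] (α β : EReal)
    (μ ν : C(X, ℝ) → ℝ) : C(X, ℝ) → ℝ :=
  fun φ => ((α + (μ φ : EReal)) ⊔ (β + (ν φ : EReal))).toReal

lemma idem_mono {X : Type*} [TopologicalSpace X] {μ : C(X, ℝ) → ℝ}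
    (h : IsIdemMeasure μ) {φ ψ : C(X, ℝ)} (hle : φ ≤ ψ) : μ φ ≤ μ ψ := by
  have h2 := h.2.2 φ ψ
  rw [sup_eq_right.2 hle] at h2
  rw [h2]; exact le_max_left _ _

lemma idem_bounds {X : Type*} [TopologicalSpace X] [CompactSpace X] [Nonempty X]
    {μ : C(X, ℝ) → ℝ} (h : IsIdemMeasure μ) (φ : C(X, ℝ)) :
    ∃ a b : X, φ a ≤ μ φ ∧ μ φ ≤ φ b := by
  obtain ⟨b, -, hb⟩ := isCompact_univ.exists_isMaxOn Set.univ_nonempty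
    φ.continuous.continuousOn
  obtain ⟨a, -, ha⟩ := isCompact_univ.exists_isMinOn Set.univ_nonempty
    φ.continuous.continuousOn
  refine ⟨a, b, ?_, ?_⟩
  · have : ContinuousMap.const X (φ a) ≤ φ := fun x => ha (Set.mem_univ x)
    simpa [h.1] using idem_mono h this
  · have : φ ≤ ContinuousMap.const X (φ b) := fun x => hb (Set.mem_univ x)
    simpa [h.1] using idem_mono h this

lemma dHat_bddAbove {X : Type*} [MetricSpace X] [CompactSpace X] [Nonempty X]
    (n : ℕ) {μ ν : C(X, ℝ) → ℝ} (hμ : IsIdemMeasure μ) (hν : IsIdemMeasure ν) :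
    BddAbove {r : ℝ | ∃ φ ∈ nLip X n, r = |μ φ - ν φ|} := by
  refine ⟨(n : ℝ) * Metric.diam (Set.univ : Set X), ?_⟩
  rintro r ⟨φ, hφ, rfl⟩
  obtain ⟨a, b, ha, hb⟩ := idem_bounds hμ φ
  obtain ⟨a', b', ha', hb'⟩ := idem_bounds hν φ
  have hd : ∀ x y : X, |φ x - φ y| ≤ (n : ℝ) * Metric.diam (Set.univ : Set X) := by
    intro x y
    refine (hφ x y).trans ?_
    exact mul_le_mul_of_nonneg_left
      (Metric.dist_le_diam_of_mem isCompact_univ.isBounded trivial trivial)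
      (Nat.cast_nonneg n)
  rw [abs_sub_le_iff]
  constructor
  · have : μ φ - ν φ ≤ φ b - φ a' := by linarith
    exact this.trans ((le_abs_self _).trans (hd b a'))
  · have : ν φ - μ φ ≤ φ b' - φ a := by linarith
    exact this.trans ((le_abs_self _).trans (hd b' a))

lemma zero_mem_dHat {X : Type*} [MetricSpace X] (n : ℕ) {μ ν : C(X, ℝ) → ℝ}
    (hμ : IsIdemMeasure μ) (hν : IsIdemMeasure ν) :
    (0 : ℝ) ∈ {r : ℝ | ∃ φ ∈ nLip X n, r = |μ φ - ν φ|} := by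
  refine ⟨ContinuousMap.const X 0, ?_, ?_⟩
  · intro x y; simp [nLip, mul_nonneg (Nat.cast_nonneg n) dist_nonneg]
  · rw [hμ.1 0, hν.1 0]; simp

lemma maxPlusComb_bounds {X : Type*} [TopologicalSpace X] {lam : EReal} (hlam : lam ≤ 0)
    (ν τ : C(X, ℝ) → ℝ) (φ : C(X, ℝ)) :
    τ φ ≤ maxPlusComb lam 0 ν τ φ ∧ maxPlusComb lam 0 ν τ φ ≤ max (ν φ) (τ φ) := by
  set e : EReal := (lam + (ν φ : EReal)) ⊔ ((0 : EReal) + (τ φ : EReal)) with he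
  have h1 : (τ φ : EReal) ≤ e := by
    rw [he]; exact le_sup_of_le_right (by rw [zero_add])
  have h2 : e ≤ ((max (ν φ) (τ φ) : ℝ) : EReal) := by
    rw [he]
    apply sup_le
    · calc lam + (ν φ : EReal) ≤ 0 + (ν φ : EReal) := add_le_add_left hlam _
        _ = (ν φ : EReal) := zero_add _
        _ ≤ _ := by exact_mod_cast EReal.coe_le_coe_iff.2 (le_max_left _ _)
    · calc (0 : EReal) + (τ φ : EReal) = (τ φ : EReal) := zero_add _
        _ ≤ _ := EReal.coe_le_coe_iff.2 (le_max_right _ _)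
  have hbot : e ≠ ⊥ := fun h => by simp [h] at h1
  have htop : e ≠ ⊤ := fun h => by simp [h] at h2
  have hdef : maxPlusComb lam 0 ν τ φ = e.toReal := rfl
  rw [hdef]
  constructor
  · simpa using EReal.toReal_le_toReal h1 (EReal.coe_ne_bot _) htop
  · simpa using EReal.toReal_le_toReal h2 hbot (EReal.coe_ne_top _)

/-- For a compact metric space `(X, d)`, `n ≥ 1`, idempotent probability
measures `μ, ν, τ` and `λ ∈ [−∞, 0]`, one has
`d̂ₙ(μ, (λ⊙ν) ⊕ τ) ≤ max(d̂ₙ(μ, ν), d̂ₙ(μ, τ))` (here `(λ⊙ν) ⊕ τ = λ⊙ν ⊕ 0⊙τ`).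
Consequently every open `d̂ₙ`-ball in `I(X)` is max-plus convex. -/
theorem statement10 {X : Type*} [MetricSpace X] [CompactSpace X] (n : ℕ) (hn : 1 ≤ n)
    (μ ν τ : C(X, ℝ) → ℝ) (hμ : IsIdemMeasure μ) (hν : IsIdemMeasure ν)
    (hτ : IsIdemMeasure τ) :
    (∀ lam : EReal, lam ≤ 0 →
      dHat n μ (maxPlusComb lam 0 ν τ) ≤ max (dHat n μ ν) (dHat n μ τ)) ∧
    (∀ ε : ℝ, 0 < ε → dHat n μ ν < ε → dHat n μ τ < ε →
      ∀ α β : EReal, α ⊔ β = 0 → dHat n μ (maxPlusComb α β ν τ) < ε) := by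
  -- X must be nonempty
  rcases isEmpty_or_nonempty X with hX | hX
  · exfalso
    have h0 := hμ.1 0
    have h1 := hμ.1 1
    have heq : ContinuousMap.const X (0:ℝ) = ContinuousMap.const X 1 := by
      ext x; exact isEmptyElim x
    rw [heq, h1] at h0
    norm_num at h0
  have key : ∀ (ν' τ' : C(X, ℝ) → ℝ), IsIdemMeasure ν' → IsIdemMeasure τ' →
      ∀ lam : EReal, lam ≤ 0 →
      dHat n μ (maxPlusComb lam 0 ν' τ') ≤ max (dHat n μ ν') (dHat n μ τ') := by
    intro ν' τ' hν' hτ' lam hlam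
    apply Real.sSup_le
    · rintro r ⟨φ, hφ, rfl⟩
      obtain ⟨hlo, hhi⟩ := maxPlusComb_bounds hlam ν' τ' φ
      have hbν : |μ φ - ν' φ| ≤ dHat n μ ν' :=
        le_csSup (dHat_bddAbove n hμ hν') ⟨φ, hφ, rfl⟩
      have hbτ : |μ φ - τ' φ| ≤ dHat n μ τ' :=
        le_csSup (dHat_bddAbove n hμ hτ') ⟨φ, hφ, rfl⟩
      obtain ⟨hb1, hb2⟩ := abs_le.1 hbν
      obtain ⟨hb3, hb4⟩ := abs_le.1 hbτ
      rw [abs_sub_le_iff]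
      constructor
      · exact le_max_of_le_right (by linarith)
      · rcases le_max_iff.1 hhi with h | h
        · exact le_max_of_le_left (by linarith)
        · exact le_max_of_le_right (by linarith)
    · exact le_max_of_le_left
        (le_csSup (dHat_bddAbove n hμ hν') (zero_mem_dHat n hμ hν'))
  refine ⟨fun lam hlam => key ν τ hν hτ lam hlam, ?_⟩
  intro ε hε h1 h2 α β hab
  have hα : α ≤ 0 := hab ▸ le_sup_left
  have hβ : β ≤ 0 := hab ▸ le_sup_right
  rcases le_total α β with hle | hle
  · have hb0 : β = 0 := by rw [← hab, sup_eq_right.2 hle]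
    rw [hb0]
    exact lt_of_le_of_lt (key ν τ hν hτ α hα) (max_lt h1 h2)
  · have ha0 : α = 0 := by rw [← hab, sup_eq_left.2 hle]
    have hswap : maxPlusComb α β ν τ = maxPlusComb β 0 τ ν := by
      rw [ha0]; funext φ; simp [maxPlusComb, sup_comm]
    rw [hswap]
    exact lt_of_le_of_lt (key τ ν hτ hν β hβ) (max_lt h2 h1)
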